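/- (Mean-payoff reduction) Let α be a good adviser refining α⁰ (α⁰(s_a) ⊆ α(s_a) for all adversary states s_a), with s_init ∉ Losing. Assign weights w(s_p, s_a) = −|α(s_a)| to every enabled protagonist transition T_p(s_p, u_p) = s_a and w(s_a, s_p) = 0 to every α-allowed adversary transition. For a winning strategy σ_p for α define its mean-payoff value ν(σ_p) = inf over σ_p-consistent α-respecting plays π of liminf_{n→∞} (1/n) Σ_{j=1}^n w(π(j), π(j+1)). Then ν(σ_p) = −(1/2)·γ(σ_p) for every winning strategy σ_p, and sup over winning strategies σ_p of ν(σ_p) = −(1/2)·λ(α); hence a strategy maximizes the mean-payoff value if and only if it minimizes γ, i.e., computing λ(α) and an optimal winning strategy reduces to solving the mean-payoff game. -/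

import Mathlib

open Filter Pointwise


private lemma key_avg (a : ℕ → ℝ) (B : ℝ) (h0 : ∀ j, 0 ≤ a j) (hB : ∀ j, a j ≤ B) :
    liminf (fun n : ℕ => (-(∑ j ∈ Finset.range ((n + 1) / 2), a j)) / (n : ℝ)) atTop
      = -(1 / 2) * limsup (fun n : ℕ => (∑ j ∈ Finset.range n, a j) / (n : ℝ)) atTop := by
  have hB0 : 0 ≤ B := le_trans (h0 0) (hB 0)
  set Sm : ℕ → ℝ := fun m => ∑ j ∈ Finset.range m, a j with hSm
  have hS0 : ∀ m, 0 ≤ Sm m := fun m => Finset.sum_nonneg fun j _ => h0 j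
  have hSB : ∀ m, Sm m ≤ m * B := by
    intro m
    calc Sm m ≤ (Finset.range m).card • B := Finset.sum_le_card_nsmul _ _ _ fun j _ => hB j
    _ = m * B := by simp [nsmul_eq_mul]
  set b : ℕ → ℝ := fun m => Sm m / m with hb
  set c : ℕ → ℝ := fun n => (-(Sm ((n + 1) / 2))) / (n : ℝ) with hc
  have hb0 : ∀ m, 0 ≤ b m := fun m => div_nonneg (hS0 m) (Nat.cast_nonneg m)
  have hbB : ∀ m, b m ≤ B := by
    intro m
    rcases Nat.eq_zero_or_pos m with h | h
    · show Sm m / (m:ℝ) ≤ B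
      simp [hSm, h, hB0]
    · show Sm m / (m:ℝ) ≤ B
      rw [div_le_iff₀ (by positivity)]
      calc Sm m ≤ m * B := hSB m
      _ = B * m := by ring
  have hcneg : ∀ n, c n ≤ 0 := fun n =>
    div_nonpos_of_nonpos_of_nonneg (neg_nonpos.mpr (hS0 _)) (Nat.cast_nonneg n)
  have hcB : ∀ n, -B ≤ c n := by
    intro n
    rcases Nat.eq_zero_or_pos n with h | h
    · show -B ≤ -Sm ((n + 1) / 2) / (n:ℝ)
      simp [h]; positivity
    · show -B ≤ -Sm ((n + 1) / 2) / (n:ℝ)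
      rw [neg_div, neg_le_neg_iff, div_le_iff₀ (by positivity : (0:ℝ) < n)]
      have h1 : ((n + 1) / 2 : ℕ) ≤ n := by omega
      calc Sm ((n + 1) / 2) ≤ ((n + 1) / 2 : ℕ) * B := hSB _
      _ ≤ n * B := mul_le_mul_of_nonneg_right (by exact_mod_cast h1) hB0
      _ = B * n := by ring
  have hbddb : IsBoundedUnder (· ≤ ·) atTop b := isBoundedUnder_of ⟨B, hbB⟩
  have hbddb' : IsBoundedUnder (· ≥ ·) atTop b := isBoundedUnder_of ⟨0, hb0⟩
  have hbddc : IsBoundedUnder (· ≤ ·) atTop c := isBoundedUnder_of ⟨0, hcneg⟩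
  have hbddc' : IsBoundedUnder (· ≥ ·) atTop c := isBoundedUnder_of ⟨-B, hcB⟩
  set L : ℝ := limsup b atTop with hL
  have hL0 : 0 ≤ L :=
    le_limsup_of_frequently_le (Frequently.of_forall hb0) hbddb
  have hLB : L ≤ B :=
    limsup_le_of_le hbddb'.isCoboundedUnder_le (Eventually.of_forall hbB)
  show liminf c atTop = -(1 / 2) * L
  apply le_antisymm
  · -- liminf c ≤ -L/2
    apply le_of_forall_pos_le_add
    intro ε hε
    rcases le_or_gt L (2 * ε) with hcase | hcase
    · have h1 : liminf c atTop ≤ 0 :=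
        liminf_le_of_frequently_le (Frequently.of_forall hcneg) hbddc'
      linarith
    · have hfreq : ∃ᶠ m in atTop, L - ε < b m :=
        frequently_lt_of_lt_limsup hbddb'.isCoboundedUnder_le (by linarith)
      have hfreq' : ∃ᶠ n in atTop, c n ≤ -(1 / 2) * L + ε := by
        rw [frequently_atTop] at hfreq ⊢
        intro N
        obtain ⟨m, hm, hbm⟩ := hfreq (max N 1)
        have hm1 : 1 ≤ m := le_trans (le_max_right N 1) hm
        have hm1r : (1:ℝ) ≤ m := by exact_mod_cast hm1
        refine ⟨2 * m - 1, by omega, ?_⟩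
        have hidx : ((2 * m - 1 + 1) / 2 : ℕ) = m := by omega
        have hncast : ((2 * m - 1 : ℕ) : ℝ) = 2 * (m : ℝ) - 1 := by
          push_cast [Nat.cast_sub (by omega : 1 ≤ 2 * m)]; ring
        have hmpos : (0:ℝ) < m := by linarith
        have hnpos : (0:ℝ) < ((2 * m - 1 : ℕ) : ℝ) := by rw [hncast]; linarith
        have hSmlb : (L - ε) * m < Sm m := by
          have h' : L - ε < Sm m / m := hbm
          rw [lt_div_iff₀ hmpos] at h'
          exact h'
        show -Sm ((2 * m - 1 + 1) / 2) / ((2 * m - 1 : ℕ) : ℝ) ≤ -(1 / 2) * L + ε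
        rw [hidx, neg_div, neg_le, le_div_iff₀ hnpos, hncast]
        nlinarith [mul_nonneg hε.le (by linarith : (0:ℝ) ≤ (m:ℝ))]
      exact liminf_le_of_frequently_le hfreq' hbddc'
  · -- -L/2 ≤ liminf c
    have key : ∀ ε > (0:ℝ), -(1 / 2) * L - ε ≤ liminf c atTop := by
      intro ε hε
      have hev1 : ∀ᶠ m in atTop, b m < L + ε :=
        eventually_lt_of_limsup_lt (by linarith) hbddb
      rw [eventually_atTop] at hev1
      obtain ⟨M, hM⟩ := hev1
      have hev : ∀ᶠ n in atTop, -(1 / 2) * L - ε ≤ c n := by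
        rw [eventually_atTop]
        refine ⟨max (2 * M + 1) (Nat.ceil ((B + ε) / ε) + 1), fun n hn => ?_⟩
        have hn1 : 1 ≤ n := by have := le_trans (le_max_left _ _) hn; omega
        have hnM : M ≤ (n + 1) / 2 := by have := le_trans (le_max_left _ _) hn; omega
        have hnε : B + ε ≤ ε * n := by
          have h3 : (Nat.ceil ((B + ε) / ε) : ℝ) ≤ n := by
            have h4 : Nat.ceil ((B + ε) / ε) ≤ n := by
              have := le_trans (le_max_right _ _) hn; omega
            exact_mod_cast h4
          have h2 : (B + ε) / ε ≤ (n : ℝ) := le_trans (Nat.le_ceil _) h3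
          rw [div_le_iff₀ hε] at h2
          linarith [h2]
        set m : ℕ := (n + 1) / 2 with hmdef
        have hm1 : 1 ≤ m := by omega
        have hbm : b m < L + ε := hM m hnM
        have hnpos : (0:ℝ) < n := by exact_mod_cast hn1
        have hmpos : (0:ℝ) < m := by exact_mod_cast hm1
        have hmub : (m : ℝ) ≤ ((n : ℝ) + 1) / 2 := by
          have h5 := Nat.cast_div_le (α := ℝ) (m := n + 1) (n := 2)
          push_cast at h5
          rw [hmdef]
          push_cast [Nat.cast_div_le]
          linarith [h5]
        have hSub : Sm m < (L + ε) * m := by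
          have h' : Sm m / m < L + ε := hbm
          rw [div_lt_iff₀ hmpos] at h'
          linarith [h']
        show -(1 / 2) * L - ε ≤ -Sm ((n + 1) / 2) / (n:ℝ)
        rw [← hmdef, neg_div, le_neg, div_le_iff₀ hnpos]
        nlinarith [hSub, hnε, hLB, mul_le_mul_of_nonneg_left hmub (by linarith : (0:ℝ) ≤ L + ε)]
      exact le_liminf_of_le hbddc.isCoboundedUnder_ge hev
    apply le_of_forall_pos_le_add
    intro ε hε
    linarith [key ε hε]


/-- A finite turn-based game arena: states `S` partitioned into protagonist states `Sp`
and adversary states `Sa`, an initial protagonist state, and partial transition functions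
`Tp : Sp × Up ⇀ Sa`, `Ta : Sa × Ua ⇀ Sp` (encoded via `Option`). -/
structure Arena (S Up Ua : Type*) where
  Sp : Set S
  Sa : Set S
  partition : ∀ s, s ∈ Sp ↔ s ∉ Sa
  sinit : S
  init_p : sinit ∈ Sp
  Tp : S → Up → Option S
  Ta : S → Ua → Option S
  Tp_dom : ∀ s u s', Tp s u = some s' → s ∈ Sp ∧ s' ∈ Sa
  Ta_dom : ∀ s u s', Ta s u = some s' → s ∈ Sa ∧ s' ∈ Sp

namespace Arena

variable {S Up Ua : Type*}

/-- `s'` is reachable from `s` by an enabled transition. -/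
def step (A : Arena S Up Ua) (s s' : S) : Prop :=
  (∃ u, A.Tp s u = some s') ∨ (∃ u, A.Ta s u = some s')

/-- The iteration `Losing^j`: `Losing^0 = Unsafe`, and `Losing^{j+1}` adds all states
every enabled transition of which leads into `Losing^j`. -/
def losingIter (A : Arena S Up Ua) (Unsafe : Set S) : ℕ → Set S
  | 0 => Unsafe
  | j + 1 =>
      losingIter A Unsafe j ∪ { s | ∀ s', A.step s s' → s' ∈ losingIter A Unsafe j }

/-- `Losing = ⋃_j Losing^j`. -/
def losing (A : Arena S Up Ua) (Unsafe : Set S) : Set S :=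
  ⋃ j, A.losingIter Unsafe j

/-- An adviser assigns to each adversary state a set of forbidden inputs, all of which
are enabled there. -/
def IsAdviser (A : Arena S Up Ua) (α : S → Set Ua) : Prop :=
  ∀ s u, u ∈ α s → s ∈ A.Sa ∧ (A.Ta s u).isSome

/-- The nominal adviser `α⁰`: at an unsafe adversary state it forbids all enabled inputs,
otherwise it forbids exactly the enabled inputs leading into `Losing`. -/
def nominal (A : Arena S Up Ua) (Unsafe : Set S) : S → Set Ua := fun s =>
  { u | (A.Ta s u).isSome ∧
      (s ∈ Unsafe ∨ ∃ s', A.Ta s u = some s' ∧ s' ∈ A.losing Unsafe) }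

/-- An (infinite) play: starts at `sinit` and follows enabled transitions. -/
def IsPlay (A : Arena S Up Ua) (π : ℕ → S) : Prop :=
  π 0 = A.sinit ∧ ∀ k, A.step (π k) (π (k + 1))

/-- A sequence respects an adviser `α` if every move from an adversary state is made
by an input not forbidden by `α`. -/
def Respects (A : Arena S Up Ua) (α : S → Set Ua) (π : ℕ → S) : Prop :=
  ∀ k, π k ∈ A.Sa → ∃ u, u ∉ α (π k) ∧ A.Ta (π k) u = some (π (k + 1))

/-- The list of the first `k+1` states of `π`. -/
def prefixList (π : ℕ → S) (k : ℕ) : List S := (List.range (k + 1)).map π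

/-- Infinite `σ`-consistent `α`-respecting plays. -/
def ConsPlay (A : Arena S Up Ua) (σ : List S → Up) (α : S → Set Ua) (π : ℕ → S) : Prop :=
  π 0 = A.sinit ∧
  (∀ k, π k ∈ A.Sp → A.Tp (π k) (σ (prefixList π k)) = some (π (k + 1))) ∧
  (∀ k, π k ∈ A.Sa → ∃ u, u ∉ α (π k) ∧ A.Ta (π k) u = some (π (k + 1)))

/-- Finite `σ`-consistent `α`-respecting prefixes (with `n` transitions). -/
def ConsPrefix (A : Arena S Up Ua) (σ : List S → Up) (α : S → Set Ua)
    (π : ℕ → S) (n : ℕ) : Prop :=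
  π 0 = A.sinit ∧
  (∀ k < n, π k ∈ A.Sp → A.Tp (π k) (σ (prefixList π k)) = some (π (k + 1))) ∧
  (∀ k < n, π k ∈ A.Sa → ∃ u, u ∉ α (π k) ∧ A.Ta (π k) u = some (π (k + 1)))

/-- `σ` is a winning strategy for the adviser `α`: every finite `σ`-consistent
`α`-respecting prefix extends to an infinite `σ`-consistent `α`-respecting play, and
every `σ`-consistent `α`-respecting play is winning (never visits `Unsafe`). -/
def WinningFor (A : Arena S Up Ua) (Unsafe : Set S) (α : S → Set Ua)
    (σ : List S → Up) : Prop :=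
  (∀ π n, A.ConsPrefix σ α π n →
    ∃ π', (∀ k ≤ n, π' k = π k) ∧ A.ConsPlay σ α π') ∧
  (∀ π, A.ConsPlay σ α π → ∀ k, π k ∉ Unsafe)

/-- A good adviser: an adviser admitting a winning protagonist strategy. -/
def GoodAdviser (A : Arena S Up Ua) (Unsafe : Set S) (α : S → Set Ua) : Prop :=
  A.IsAdviser α ∧ ∃ σ : List S → Up, A.WinningFor Unsafe α σ

/-- Blocking states of the arena: the least set containing every state all of whose
enabled transitions lead into the set (in particular states with no enabled input). -/
inductive Blocked (A : Arena S Up Ua) : S → Prop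
  | intro (s : S) (h : ∀ s', A.step s s' → Blocked A s') : Blocked A s

/-- Blocking states of the `α`-restricted arena: the least set `B` such that an adversary
state belongs to `B` whenever every enabled input is forbidden or leads into `B`, and a
protagonist state belongs to `B` whenever every enabled transition leads into `B`. -/
inductive BlockedRel (A : Arena S Up Ua) (α : S → Set Ua) : S → Prop
  | adv (s : S) (hs : s ∈ A.Sa)
      (h : ∀ u s', A.Ta s u = some s' → u ∉ α s → BlockedRel A α s') :
      BlockedRel A α s
  | pro (s : S) (hs : s ∈ A.Sp)
      (h : ∀ u s', A.Tp s u = some s' → BlockedRel A α s') :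
      BlockedRel A α s

/-- `γ(σ)`: the supremum, over `σ`-consistent `α`-respecting plays, of the limsup of
the running average of the numbers of inputs forbidden at the visited adversary states
(which occupy the odd positions of a play). -/
noncomputable def gamma (A : Arena S Up Ua) (α : S → Set Ua) (σ : List S → Up) : ℝ :=
  sSup { x | ∃ π, A.ConsPlay σ α π ∧
    x = limsup (fun n => (∑ j ∈ Finset.range n, ((α (π (2 * j + 1))).ncard : ℝ)) / (n : ℝ))
          atTop }

/-- `λ(α)`: the infimum of `γ(σ)` over winning strategies `σ` for `α`. -/
noncomputable def lam (A : Arena S Up Ua) (Unsafe : Set S) (α : S → Set Ua) : ℝ :=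
  sInf { x | ∃ σ, A.WinningFor Unsafe α σ ∧ x = A.gamma α σ }

/-- The mean-payoff weight of the `k`-th transition of `π`: `-|α(s_a)|` on protagonist
transitions (entering the adversary state `s_a`) and `0` on adversary transitions. -/
noncomputable def mpWeight (A : Arena S Up Ua) (α : S → Set Ua) (π : ℕ → S) (k : ℕ) : ℝ :=
  A.Sp.indicator (fun _ => -((α (π (k + 1))).ncard : ℝ)) (π k)

/-- `ν(σ)`: the mean-payoff value secured by `σ`. -/
noncomputable def nu (A : Arena S Up Ua) (α : S → Set Ua) (σ : List S → Up) : ℝ :=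
  sInf { x | ∃ π, A.ConsPlay σ α π ∧
    x = liminf (fun n => (∑ k ∈ Finset.range n, A.mpWeight α π k) / (n : ℝ)) atTop }


lemma consPlay_alt (A : Arena S Up Ua) (σ : List S → Up) (α : S → Set Ua) (π : ℕ → S)
    (h : A.ConsPlay σ α π) :
    ∀ k, (k % 2 = 0 → π k ∈ A.Sp) ∧ (k % 2 = 1 → π k ∈ A.Sa) := by
  intro k
  induction k with
  | zero => exact ⟨fun _ => h.1 ▸ A.init_p, fun hk => by omega⟩
  | succ k ih =>
    rcases Nat.even_or_odd k with ⟨m, hm⟩ | ⟨m, hm⟩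
    · have hp : π k ∈ A.Sp := ih.1 (by omega)
      have ht := h.2.1 k hp
      have := (A.Tp_dom _ _ _ ht).2
      exact ⟨fun hk => by omega, fun _ => this⟩
    · have ha : π k ∈ A.Sa := ih.2 (by omega)
      obtain ⟨u, _, hu⟩ := h.2.2 k ha
      have := (A.Ta_dom _ _ _ hu).2
      exact ⟨fun _ => this, fun hk => by omega⟩

lemma sum_mpWeight (A : Arena S Up Ua) (σ : List S → Up) (α : S → Set Ua) (π : ℕ → S)
    (h : A.ConsPlay σ α π) (n : ℕ) :
    ∑ k ∈ Finset.range n, A.mpWeight α π k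
      = -(∑ j ∈ Finset.range ((n + 1) / 2), ((α (π (2 * j + 1))).ncard : ℝ)) := by
  induction n with
  | zero => simp
  | succ n ih =>
    rw [Finset.sum_range_succ, ih]
    rcases Nat.even_or_odd n with ⟨m, hm⟩ | ⟨m, hm⟩
    · have hp : π n ∈ A.Sp := (A.consPlay_alt σ α π h n).1 (by omega)
      have hw : A.mpWeight α π n = -((α (π (n + 1))).ncard : ℝ) :=
        Set.indicator_of_mem hp _
      have h1 : ((n + 1 + 1) / 2 : ℕ) = (n + 1) / 2 + 1 := by omega
      have h2 : 2 * ((n + 1) / 2) + 1 = n + 1 := by omega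
      rw [hw, h1, Finset.sum_range_succ, h2]
      ring
    · have ha : π n ∈ A.Sa := (A.consPlay_alt σ α π h n).2 (by omega)
      have hnp : π n ∉ A.Sp := fun hp => (A.partition (π n)).mp hp ha
      have hw : A.mpWeight α π n = 0 := Set.indicator_of_notMem hnp _
      have h1 : ((n + 1 + 1) / 2 : ℕ) = (n + 1) / 2 := by omega
      rw [hw, h1]
      ring

lemma perPlay [Fintype Ua] (A : Arena S Up Ua) (σ : List S → Up) (α : S → Set Ua) (π : ℕ → S)
    (h : A.ConsPlay σ α π) :
    liminf (fun n => (∑ k ∈ Finset.range n, A.mpWeight α π k) / (n : ℝ)) atTop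
      = -(1 / 2) *
        limsup (fun n => (∑ j ∈ Finset.range n, ((α (π (2 * j + 1))).ncard : ℝ)) / (n : ℝ))
          atTop := by
  have hbd : ∀ j : ℕ, ((α (π (2 * j + 1))).ncard : ℝ) ≤ (Fintype.card Ua : ℝ) := by
    intro j
    have h1 : (α (π (2 * j + 1))).ncard ≤ (Set.univ : Set Ua).ncard :=
      Set.ncard_le_ncard (Set.subset_univ _) Set.finite_univ
    rw [Set.ncard_univ, Nat.card_eq_fintype_card] at h1
    exact_mod_cast h1
  have := key_avg (fun j => ((α (π (2 * j + 1))).ncard : ℝ)) (Fintype.card Ua)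
    (fun j => by positivity) hbd
  rw [← this]
  congr 1
  funext n
  rw [A.sum_mpWeight σ α π h n]

end Arena


/-- mean-payoff reduction: for a good adviser `α` refining `α⁰` with
`sinit ∉ Losing`, the mean-payoff value of every winning strategy equals `-(1/2)·γ`,
the optimal mean-payoff value equals `-(1/2)·λ(α)`, and a winning strategy maximizes
the mean-payoff value iff it minimizes `γ`. -/
theorem mean_payoff_reduction
    {S Up Ua : Type*} [Fintype S] [Fintype Up] [Fintype Ua]
    (A : Arena S Up Ua) (Unsafe : Set S) (α : S → Set Ua)
    (hadv : A.IsAdviser α)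
    (href : ∀ s, A.nominal Unsafe s ⊆ α s)
    (hinit : A.sinit ∉ A.losing Unsafe)
    (hgood : A.GoodAdviser Unsafe α) :
    (∀ σ : List S → Up, A.WinningFor Unsafe α σ →
      A.nu α σ = -(1 / 2) * A.gamma α σ) ∧
    sSup { x | ∃ σ : List S → Up, A.WinningFor Unsafe α σ ∧ x = A.nu α σ } =
      -(1 / 2) * A.lam Unsafe α ∧
    (∀ σ : List S → Up, A.WinningFor Unsafe α σ →
      ((∀ σ' : List S → Up, A.WinningFor Unsafe α σ' → A.nu α σ' ≤ A.nu α σ) ↔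
       (∀ σ' : List S → Up, A.WinningFor Unsafe α σ' →
          A.gamma α σ ≤ A.gamma α σ'))) := by

  have h1 : ∀ σ : List S → Up, A.WinningFor Unsafe α σ →
      A.nu α σ = -(1 / 2) * A.gamma α σ := by
    intro σ hσ
    have hseteq :
        { x | ∃ π, A.ConsPlay σ α π ∧
            x = liminf (fun n => (∑ k ∈ Finset.range n, A.mpWeight α π k) / (n : ℝ)) atTop }
          = ((-(1 / 2) : ℝ) •
            { x | ∃ π, A.ConsPlay σ α π ∧
              x = limsup
                (fun n => (∑ j ∈ Finset.range n, ((α (π (2 * j + 1))).ncard : ℝ)) / (n : ℝ))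
                atTop } : Set ℝ) := by
      ext x
      simp only [Set.mem_smul_set, Set.mem_setOf_eq, smul_eq_mul]
      constructor
      · rintro ⟨π, hπ, rfl⟩
        exact ⟨_, ⟨π, hπ, rfl⟩, (A.perPlay σ α π hπ).symm⟩
      · rintro ⟨y, ⟨π, hπ, rfl⟩, rfl⟩
        exact ⟨π, hπ, (A.perPlay σ α π hπ).symm⟩
    unfold Arena.nu Arena.gamma
    rw [hseteq, Real.sInf_smul_of_nonpos (by norm_num), smul_eq_mul]
  refine ⟨h1, ?_, ?_⟩
  · have hseteq :
        { x | ∃ σ : List S → Up, A.WinningFor Unsafe α σ ∧ x = A.nu α σ }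
          = ((-(1 / 2) : ℝ) •
            { x | ∃ σ : List S → Up, A.WinningFor Unsafe α σ ∧ x = A.gamma α σ } : Set ℝ) := by
      ext x
      simp only [Set.mem_smul_set, Set.mem_setOf_eq, smul_eq_mul]
      constructor
      · rintro ⟨σ, hσ, rfl⟩
        exact ⟨_, ⟨σ, hσ, rfl⟩, (h1 σ hσ).symm⟩
      · rintro ⟨y, ⟨σ, hσ, rfl⟩, rfl⟩
        exact ⟨σ, hσ, (h1 σ hσ).symm⟩
    rw [hseteq, Real.sSup_smul_of_nonpos (by norm_num), smul_eq_mul]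
    rfl
  · intro σ hσ
    constructor
    · intro h σ' hσ'
      have h2 := h σ' hσ'
      rw [h1 σ hσ, h1 σ' hσ'] at h2
      linarith
    · intro h σ' hσ'
      have h2 := h σ' hσ'
      rw [h1 σ hσ, h1 σ' hσ']
      linarith
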